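/- arXiv:1409.4036 — 4 statements merged into one kernel-verified Lean document; each statement's English description precedes it below -/
import Mathlib

section
/- Choi's theorem: a linear map Φ : M_d(ℂ) → M_d(ℂ) is completely positive if and only if its Choi operator Ω_Φ = (Φ ⊗ Id)[|Ψ_+⟩⟨Ψ_+|] is positive semidefinite. -/
open Matrix Kronecker BigOperators ComplexOrder

noncomputable section

/-- A quantum state: positive semidefinite with unit trace. -/
def IsState {ι : Type*} [Fintype ι] (ρ : Matrix ι ι ℂ) : Prop :=
  ρ.PosSemidef ∧ ρ.trace = 1

/-- Partial transpose on the second tensor factor. -/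
def ptB {ι κ : Type*} (ρ : Matrix (ι × κ) (ι × κ) ℂ) : Matrix (ι × κ) (ι × κ) ℂ :=
  Matrix.of fun p q => ρ (p.1, q.2) (q.1, p.2)

/-- Partial transpose on the first tensor factor. -/
def ptA {ι κ : Type*} (ρ : Matrix (ι × κ) (ι × κ) ℂ) : Matrix (ι × κ) (ι × κ) ℂ :=
  Matrix.of fun p q => ρ (q.1, p.2) (p.1, q.2)

/-- The maximally entangled projector |Ψ₊⟩⟨Ψ₊|. -/
def maxEntProj (ι : Type*) [Fintype ι] [DecidableEq ι] : Matrix (ι × ι) (ι × ι) ℂ :=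
  Matrix.of fun p q => if p.1 = p.2 ∧ q.1 = q.2 then (Fintype.card ι : ℂ)⁻¹ else 0

/-- Ampliation Φ ⊗ Id acting on the first factor. -/
def amplify {ι κ : Type*} (Φ : Matrix ι ι ℂ → Matrix ι ι ℂ)
    (M : Matrix (ι × κ) (ι × κ) ℂ) : Matrix (ι × κ) (ι × κ) ℂ :=
  Matrix.of fun p q => Φ (Matrix.of fun i j => M (i, p.2) (j, q.2)) p.1 q.1

/-- Ampliation Id ⊗ Φ acting on the second factor. -/
def amplifyL {ι κ : Type*} (Φ : Matrix κ κ ℂ → Matrix κ κ ℂ)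
    (M : Matrix (ι × κ) (ι × κ) ℂ) : Matrix (ι × κ) (ι × κ) ℂ :=
  Matrix.of fun p q => Φ (Matrix.of fun k l => M (p.1, k) (q.1, l)) p.2 q.2

/-- The tensor product map Φ₁ ⊗ Φ₂. -/
def tensorMap {ι κ : Type*} (Φ₁ : Matrix ι ι ℂ → Matrix ι ι ℂ)
    (Φ₂ : Matrix κ κ ℂ → Matrix κ κ ℂ)
    (M : Matrix (ι × κ) (ι × κ) ℂ) : Matrix (ι × κ) (ι × κ) ℂ :=
  amplify Φ₁ (amplifyL Φ₂ M)

/-- The Choi operator Ω_Φ = (Φ ⊗ Id)[|Ψ₊⟩⟨Ψ₊|]. -/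
def choi {ι : Type*} [Fintype ι] [DecidableEq ι] (Φ : Matrix ι ι ℂ → Matrix ι ι ℂ) :
    Matrix (ι × ι) (ι × ι) ℂ := amplify Φ (maxEntProj ι)

/-- Complete positivity via positivity of all ampliations. -/
def IsCP {ι : Type*} [Fintype ι] (Φ : Matrix ι ι ℂ → Matrix ι ι ℂ) : Prop :=
  ∀ (k : ℕ) (M : Matrix (ι × Fin k) (ι × Fin k) ℂ), M.PosSemidef → (amplify Φ M).PosSemidef

/-- Partial trace over the second tensor factor. -/
def ptrace2 {ι κ : Type*} [Fintype κ] (M : Matrix (ι × κ) (ι × κ) ℂ) : Matrix ι ι ℂ :=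
  Matrix.of fun i j => ∑ k, M (i, k) (j, k)

/-- Product vector u ⊗ v. -/
def prodVec {ι κ : Type*} (u : ι → ℂ) (v : κ → ℂ) : ι × κ → ℂ := fun p => u p.1 * v p.2

lemma maxEntProj_posSemidef (ι : Type*) [Fintype ι] [DecidableEq ι] :
    (maxEntProj ι).PosSemidef := by
  set c : ℂ := (Fintype.card ι : ℂ)⁻¹ with hc
  refine Matrix.PosSemidef.of_dotProduct_mulVec_nonneg ?_ ?_
  · ext p q
    simp [maxEntProj, Matrix.conjTranspose_apply, and_comm]
    split <;> simp
  · intro x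
    set s : ℂ := ∑ i, x (i, i) with hsdef
    have hmv : ∀ p : ι × ι, (maxEntProj ι *ᵥ x) p = if p.1 = p.2 then c * s else 0 := by
      intro p
      simp only [mulVec, dotProduct, maxEntProj, Matrix.of_apply, ite_and, ite_mul, zero_mul]
      rcases eq_or_ne p.1 p.2 with hp | hp
      · simp [hp, Fintype.sum_prod_type, Finset.sum_ite_eq, Finset.mul_sum, hsdef, hc]
      · simp [hp]
    have h : dotProduct (star x) (maxEntProj ι *ᵥ x) = c * (starRingEnd ℂ s * s) := by
      simp only [dotProduct, hmv, Pi.star_apply, mul_ite, mul_zero, RCLike.star_def]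
      rw [Fintype.sum_prod_type]
      simp only [Finset.sum_ite_eq, Finset.sum_ite_eq', Finset.mem_univ, if_true]
      rw [← Finset.sum_mul, ← map_sum, ← hsdef]
      ring
    rw [h, ← Complex.normSq_eq_conj_mul_self, hc, ← Complex.ofReal_natCast,
      ← Complex.ofReal_inv, ← Complex.ofReal_mul, Complex.zero_le_real]
    exact mul_nonneg (by positivity) (Complex.normSq_nonneg _)

lemma sum_swap4 {α β γ δ M : Type*} [Fintype α] [Fintype β] [Fintype γ] [Fintype δ]
    [AddCommMonoid M] (F : α → β → γ → δ → M) :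
    ∑ i, ∑ j, ∑ b, ∑ a, F i j a b = ∑ a, ∑ b, ∑ i, ∑ j, F i j a b := by
  calc ∑ i, ∑ j, ∑ b, ∑ a, F i j a b
      = ∑ i, ∑ j, ∑ a, ∑ b, F i j a b :=
        Finset.sum_congr rfl fun i _ => Finset.sum_congr rfl fun j _ => Finset.sum_comm
    _ = ∑ i, ∑ a, ∑ j, ∑ b, F i j a b :=
        Finset.sum_congr rfl fun i _ => Finset.sum_comm
    _ = ∑ a, ∑ i, ∑ j, ∑ b, F i j a b := Finset.sum_comm
    _ = ∑ a, ∑ i, ∑ b, ∑ j, F i j a b :=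
        Finset.sum_congr rfl fun a _ => Finset.sum_congr rfl fun i _ => Finset.sum_comm
    _ = ∑ a, ∑ b, ∑ i, ∑ j, F i j a b :=
        Finset.sum_congr rfl fun a _ => Finset.sum_comm

set_option maxHeartbeats 1000000 in
/-- Choi's theorem. -/
theorem choi_CP_iff {d : ℕ}
    (Φ : Matrix (Fin d) (Fin d) ℂ →ₗ[ℂ] Matrix (Fin d) (Fin d) ℂ) :
    IsCP ⇑Φ ↔ (choi ⇑Φ).PosSemidef := by
  constructor
  · intro h
    exact h d (maxEntProj (Fin d)) (maxEntProj_posSemidef _)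
  · intro hC k M hM
    rcases eq_or_ne d 0 with hd | hd
    · subst hd
      refine Matrix.PosSemidef.of_dotProduct_mulVec_nonneg ?_ ?_
      · ext p q; exact p.1.elim0
      · intro x
        simp [dotProduct, Finset.univ_eq_empty]
    have hdc : (d : ℂ) ≠ 0 := Nat.cast_ne_zero.mpr hd
    obtain ⟨B₀, hB₀⟩ : ∃ B₀ : Matrix (Fin d × Fin k) (Fin d × Fin k) ℂ, M = B₀ᴴ * B₀ := by
      open scoped MatrixOrder in
      exact CStarAlgebra.nonneg_iff_eq_star_mul_self.mp hM.nonneg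
    set B : Matrix (Fin d × Fin k) (Fin d × Fin k) ℂ := ((Real.sqrt d : ℝ) : ℂ) • B₀ with hBdef
    have hBB : Bᴴ * B = (d : ℂ) • M := by
      rw [hBdef, conjTranspose_smul, Matrix.smul_mul, Matrix.mul_smul, smul_smul, ← hB₀]
      congr 1
      rw [Complex.star_def, Complex.conj_ofReal, ← Complex.ofReal_mul,
        Real.mul_self_sqrt (by positivity)]
      norm_num
    have hE : ∀ (a b x y : Fin d),
        Φ (Matrix.single a b 1) x y = (d : ℂ) * choi ⇑Φ (x, a) (y, b) := by
      intro a b x y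
      have hm : (Matrix.of fun i j => maxEntProj (Fin d) (i, a) (j, b) :
          Matrix (Fin d) (Fin d) ℂ) = (d : ℂ)⁻¹ • Matrix.single a b 1 := by
        ext i j
        simp only [Matrix.of_apply, maxEntProj, Matrix.single, Matrix.smul_apply,
          Fintype.card_fin, smul_eq_mul, mul_ite, mul_one, mul_zero]
        split_ifs with h1 h2 <;> simp_all
      show _ = (d : ℂ) * Φ (Matrix.of fun i j => maxEntProj (Fin d) (i, a) (j, b)) x y
      rw [hm, _root_.map_smul, Matrix.smul_apply, smul_eq_mul, ← mul_assoc,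
        mul_inv_cancel₀ hdc, one_mul]
    set A : (Fin d × Fin k) → Matrix (Fin d × Fin d) (Fin d × Fin k) ℂ :=
      fun r => Matrix.of fun p q => if p.1 = q.1 then B r (p.2, q.2) else 0 with hAdef
    have key : amplify ⇑Φ M = ∑ r, (A r)ᴴ * choi ⇑Φ * A r := by
      ext ⟨x, s⟩ ⟨y, t⟩
      have hblock : (Matrix.of fun i j => M (i, s) (j, t) : Matrix (Fin d) (Fin d) ℂ)
          = ∑ a, ∑ b, M (a, s) (b, t) • Matrix.single a b (1 : ℂ) := by
        ext i j
        simp [Matrix.sum_apply, Matrix.single, ite_and, mul_ite, mul_zero,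
          Finset.sum_ite_eq, Finset.sum_ite_eq']
      have hL : amplify ⇑Φ M (x, s) (y, t)
          = ∑ a, ∑ b, M (a, s) (b, t) * ((d : ℂ) * choi ⇑Φ (x, a) (y, b)) := by
        show Φ (Matrix.of fun i j => M (i, s) (j, t)) x y = _
        rw [hblock]
        simp only [map_sum, _root_.map_smul, Matrix.sum_apply, Matrix.smul_apply, smul_eq_mul]
        exact Finset.sum_congr rfl fun a _ => Finset.sum_congr rfl fun b _ => by rw [hE]
      have hR : (∑ r, (A r)ᴴ * choi ⇑Φ * A r) (x, s) (y, t)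
          = ∑ a, ∑ b, ((Bᴴ * B) (a, s) (b, t)) * choi ⇑Φ (x, a) (y, b) := by
        simp only [Matrix.sum_apply, Matrix.mul_apply, Matrix.conjTranspose_apply, hAdef,
          Matrix.of_apply, apply_ite (star : ℂ → ℂ), star_zero, ite_mul, zero_mul,
          mul_ite, mul_zero, Fintype.sum_prod_type, Finset.sum_ite_eq, Finset.sum_ite_eq',
          Finset.mem_univ, if_true, Finset.sum_ite_irrel, Finset.sum_const_zero]
        simp only [Finset.sum_mul]
        rw [sum_swap4]
        refine Finset.sum_congr rfl fun a _ => Finset.sum_congr rfl fun b _ =>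
          Finset.sum_congr rfl fun r1 _ => Finset.sum_congr rfl fun r2 _ => by ring
      rw [hL, hR, hBB]
      refine Finset.sum_congr rfl fun a _ => Finset.sum_congr rfl fun b _ => ?_
      rw [Matrix.smul_apply, smul_eq_mul]
      ring
    rw [key]
    apply Finset.sum_induction _ Matrix.PosSemidef (fun a b ha hb => ha.add hb)
      Matrix.PosSemidef.zero
    intro r _
    exact hC.conjTranspose_mul_mul_same (A r)
end
end

section
/- Sufficient condition for PPT-inducing: if Φ is a quantum channel on M_m(ℂ) ⊗ M_n(ℂ) whose partially transposed Choi operator Ω_Φ^{A(B)^T A'B'} is positive semidefinite, then Φ[ρ] is PPT (with respect to A|B) for every input state ρ. -/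
open Matrix Kronecker BigOperators ComplexOrder

noncomputable section

/-- Partial transpose on the output B factor of a Choi operator on (A×B)×(A'×B'). -/
def ptOutB {m n : ℕ}
    (Ω : Matrix ((Fin m × Fin n) × (Fin m × Fin n)) ((Fin m × Fin n) × (Fin m × Fin n)) ℂ) :
    Matrix ((Fin m × Fin n) × (Fin m × Fin n)) ((Fin m × Fin n) × (Fin m × Fin n)) ℂ :=
  Matrix.of fun p q => Ω ((p.1.1, q.1.2), p.2) ((q.1.1, p.1.2), q.2)


lemma mycollapse {α β : Type*} [Fintype α] [Fintype β] [DecidableEq α]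
    (F : α × β → ℂ) (P : α) :
    (∑ i : α × β, if i.1 = P then F i else 0) = ∑ e, F (P, e) := by
  rw [Fintype.sum_prod_type]
  rw [Finset.sum_eq_single P]
  · simp
  · intro b _ hb; simp [hb]
  · intro hP; exact absurd (Finset.mem_univ P) hP

lemma myPSD_sum {ι α : Type*} [Fintype ι] [Fintype α] (f : α → Matrix ι ι ℂ)
    (h : ∀ a, (f a).PosSemidef) : (∑ a, f a).PosSemidef :=
  Finset.sum_induction f _ (fun _ _ ha hb => ha.add hb) Matrix.PosSemidef.zero
    (fun a _ => h a)

lemma myPSD_nsmul {ι : Type*} [Fintype ι] {M : Matrix ι ι ℂ} (hM : M.PosSemidef) (k : ℕ) :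
    (((k : ℂ)) • M).PosSemidef := by
  induction k with
  | zero => simpa using Matrix.PosSemidef.zero
  | succ k ih =>
    push_cast
    rw [add_smul, one_smul]
    exact ih.add hM

lemma mylin_apply {ι : Type*} [Fintype ι] [DecidableEq ι]
    (Φ : Matrix ι ι ℂ →ₗ[ℂ] Matrix ι ι ℂ) (X : Matrix ι ι ℂ) (x y : ι) :
    Φ X x y = ∑ e, ∑ f, X e f * Φ (Matrix.single e f 1) x y := by
  conv_lhs => rw [Matrix.matrix_eq_sum_single X]
  rw [map_sum]
  simp only [map_sum, Matrix.sum_apply]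
  refine Finset.sum_congr rfl fun e _ => Finset.sum_congr rfl fun f _ => ?_
  have h1 : Matrix.single e f (X e f) = X e f • Matrix.single e f 1 := by
    rw [Matrix.smul_single, smul_eq_mul, mul_one]
  rw [h1, Φ.map_smul, Matrix.smul_apply, smul_eq_mul]

lemma mychoi_entry {ι : Type*} [Fintype ι] [DecidableEq ι]
    (Φ : Matrix ι ι ℂ →ₗ[ℂ] Matrix ι ι ℂ) (x e y f : ι) :
    choi ⇑Φ (x, e) (y, f) = (Fintype.card ι : ℂ)⁻¹ * Φ (Matrix.single e f 1) x y := by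
  have hmat : (Matrix.of fun i j => maxEntProj ι (i, e) (j, f))
      = (Fintype.card ι : ℂ)⁻¹ • Matrix.single e f 1 := by
    ext i j
    simp only [Matrix.of_apply, maxEntProj, Matrix.smul_apply, Matrix.single,
      smul_ite, smul_zero, smul_eq_mul, mul_one]
    have hcond : (i = e ∧ j = f) ↔ (e = i ∧ f = j) := by
      constructor <;> rintro ⟨rfl, rfl⟩ <;> exact ⟨rfl, rfl⟩
    rw [if_congr hcond rfl rfl]
    split_ifs <;> simp
  show Φ (Matrix.of fun i j => maxEntProj ι (i, e) (j, f)) x y = _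
  rw [hmat, Φ.map_smul, Matrix.smul_apply, smul_eq_mul]

/-- sufficient condition — if the partially transposed Choi operator of a
channel is positive semidefinite, the channel is PPT-inducing. -/
theorem ptChoi_psd_implies_PPT_inducing {m n : ℕ}
    (Φ : Matrix (Fin m × Fin n) (Fin m × Fin n) ℂ →ₗ[ℂ]
         Matrix (Fin m × Fin n) (Fin m × Fin n) ℂ)
    (hCP : IsCP ⇑Φ) (hTP : ∀ X, (Φ X).trace = X.trace)
    (h : (ptOutB (choi ⇑Φ)).PosSemidef) :
    ∀ ρ, IsState ρ → (ptB (Φ ρ)).PosSemidef := by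
  intro ρ hρ
  by_cases hel : IsEmpty (Fin m × Fin n)
  · refine ⟨?_, ?_⟩
    · ext i j; exact hel.elim i
    · intro x
      simp [dotProduct, Finset.univ_eq_empty, Finsupp.sum, Finset.eq_empty_of_isEmpty]
  · have hne : Nonempty (Fin m × Fin n) := not_isEmpty_iff.mp hel
    set c : ℂ := (Fintype.card (Fin m × Fin n) : ℂ) with hcdef
    have hc0 : c ≠ 0 := by
      rw [hcdef]
      exact_mod_cast Fintype.card_ne_zero
    obtain ⟨B, hB⟩ : ∃ B : Matrix (Fin m × Fin n) (Fin m × Fin n) ℂ, ρ = Bᴴ * B := by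
      open scoped MatrixOrder Matrix.Norms.L2Operator in
      exact CStarAlgebra.nonneg_iff_eq_star_mul_self.mp hρ.1.nonneg
    set Θ := ptOutB (choi ⇑Φ) with hΘdef
    have key : ∀ P Q : Fin m × Fin n, ptB (Φ ρ) P Q
        = ∑ e, ∑ f, ρ e f * (c * Θ (P, e) (Q, f)) := by
      intro P Q
      have h1 : ptB (Φ ρ) P Q = Φ ρ (P.1, Q.2) (Q.1, P.2) := rfl
      rw [h1, mylin_apply]
      refine Finset.sum_congr rfl fun e _ => Finset.sum_congr rfl fun f _ => ?_
      have h2 : Θ (P, e) (Q, f) = choi ⇑Φ ((P.1, Q.2), e) ((Q.1, P.2), f) := rfl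
      rw [h2, mychoi_entry, mul_inv_cancel_left₀ hc0]
    have hρe : ∀ e f, ρ e f = ∑ r, (starRingEnd ℂ) (B r e) * B r f := by
      intro e f
      rw [hB]
      simp [Matrix.mul_apply, Matrix.conjTranspose_apply]
    set C : (Fin m × Fin n) → Matrix ((Fin m × Fin n) × (Fin m × Fin n)) (Fin m × Fin n) ℂ :=
      fun r => Matrix.of fun pe q => if pe.1 = q then B r pe.2 else 0 with hCdef
    have hstep : ∀ (g : (Fin m × Fin n) → (Fin m × Fin n) → (Fin m × Fin n) → ℂ),
        (∑ e, ∑ f, ∑ r, g e f r) = ∑ r, ∑ e, ∑ f, g e f r := by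
      intro g
      calc (∑ e, ∑ f, ∑ r, g e f r)
          = ∑ e, ∑ r, ∑ f, g e f r := Finset.sum_congr rfl fun e _ => Finset.sum_comm
        _ = ∑ r, ∑ e, ∑ f, g e f r := Finset.sum_comm
    have hRHS : ∀ (r : Fin m × Fin n) (P Q : Fin m × Fin n), ((C r)ᴴ * Θ * (C r)) P Q
        = ∑ f, (∑ e, (starRingEnd ℂ) (B r e) * Θ (P, e) (Q, f)) * B r f := by
      intro r P Q
      have h1 : ∀ j, ((C r)ᴴ * Θ) P j = ∑ e, (starRingEnd ℂ) (B r e) * Θ (P, e) j := by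
        intro j
        rw [Matrix.mul_apply]
        calc (∑ i, (C r)ᴴ P i * Θ i j)
            = ∑ i : (Fin m × Fin n) × (Fin m × Fin n),
                (if i.1 = P then (starRingEnd ℂ) (B r i.2) * Θ i j else 0) := by
              refine Finset.sum_congr rfl fun i _ => ?_
              by_cases hi : i.1 = P <;>
                simp [Matrix.conjTranspose_apply, hCdef, hi]
          _ = ∑ e, (starRingEnd ℂ) (B r e) * Θ (P, e) j := mycollapse _ _
      calc ((C r)ᴴ * Θ * (C r)) P Q
          = ∑ j, ((C r)ᴴ * Θ) P j * C r j Q := Matrix.mul_apply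
        _ = ∑ j : (Fin m × Fin n) × (Fin m × Fin n),
              (if j.1 = Q then ((C r)ᴴ * Θ) P j * B r j.2 else 0) := by
            refine Finset.sum_congr rfl fun j _ => ?_
            by_cases hj : j.1 = Q <;> simp [hCdef, hj]
        _ = ∑ f, ((C r)ᴴ * Θ) P (Q, f) * B r f := mycollapse _ _
        _ = ∑ f, (∑ e, (starRingEnd ℂ) (B r e) * Θ (P, e) (Q, f)) * B r f := by
            refine Finset.sum_congr rfl fun f _ => ?_
            rw [h1]
    have hmat : ptB (Φ ρ) = c • ∑ r, ((C r)ᴴ * Θ * (C r)) := by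
      ext P Q
      rw [Matrix.smul_apply, Matrix.sum_apply, smul_eq_mul]
      calc ptB (Φ ρ) P Q
          = ∑ e, ∑ f, ∑ r, (starRingEnd ℂ) (B r e) * B r f * (c * Θ (P, e) (Q, f)) := by
            rw [key]
            exact Finset.sum_congr rfl fun e _ => Finset.sum_congr rfl fun f _ => by
              rw [hρe, Finset.sum_mul]
        _ = ∑ r, ∑ e, ∑ f, (starRingEnd ℂ) (B r e) * B r f * (c * Θ (P, e) (Q, f)) :=
            hstep _
        _ = c * ∑ r, ((C r)ᴴ * Θ * (C r)) P Q := by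
            rw [Finset.mul_sum]
            refine Finset.sum_congr rfl fun r _ => ?_
            rw [hRHS, Finset.sum_comm, Finset.mul_sum]
            refine Finset.sum_congr rfl fun f _ => ?_
            rw [Finset.sum_mul, Finset.mul_sum]
            refine Finset.sum_congr rfl fun e _ => ?_
            ring
    rw [hmat, hcdef]
    exact myPSD_nsmul (myPSD_sum _ fun r => h.conjTranspose_mul_mul_same (C r)) _
end
end

section
/- One-sided channels: the channel Φ ⊗ Id_B on M_m(ℂ) ⊗ M_n(ℂ) with n ≥ m is PPT-inducing (maps every state to a PPT state) if and only if the Choi operator Ω_Φ of Φ is PPT. -/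
open Matrix Kronecker BigOperators ComplexOrder

noncomputable section

/-! ### Auxiliary lemmas -/

lemma sum4 {α β γ δ : Type*} [Fintype α] [Fintype β] [Fintype γ] [Fintype δ]
    (f : α → β → γ → δ → ℂ) :
    ∑ a, ∑ b, ∑ c, ∑ d, f a b c d = ∑ d, ∑ c, ∑ a, ∑ b, f a b c d := by
  have h3 : ∀ (g : β → γ → δ → ℂ),
      (∑ b, ∑ c, ∑ d, g b c d) = ∑ d, ∑ c, ∑ b, g b c d := by
    intro g
    calc ∑ b, ∑ c, ∑ d, g b c d
        = ∑ c, ∑ b, ∑ d, g b c d := Finset.sum_comm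
      _ = ∑ c, ∑ d, ∑ b, g b c d := Finset.sum_congr rfl fun c _ => Finset.sum_comm
      _ = ∑ d, ∑ c, ∑ b, g b c d := Finset.sum_comm
  calc ∑ a, ∑ b, ∑ c, ∑ d, f a b c d
      = ∑ a, ∑ d, ∑ c, ∑ b, f a b c d :=
        Finset.sum_congr rfl fun a _ => h3 (fun b c d => f a b c d)
    _ = ∑ d, ∑ a, ∑ c, ∑ b, f a b c d := Finset.sum_comm
    _ = ∑ d, ∑ c, ∑ a, ∑ b, f a b c d := Finset.sum_congr rfl fun d _ => Finset.sum_comm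

lemma choi_apply' {m : ℕ} (Ψ : Matrix (Fin m) (Fin m) ℂ →ₗ[ℂ] Matrix (Fin m) (Fin m) ℂ)
    (a b i j : Fin m) :
    choi ⇑Ψ ((a,i)) ((b,j)) = (m:ℂ)⁻¹ * Ψ (single i j 1) a b := by
  have h1 : (Matrix.of fun i' j' => maxEntProj (Fin m) (i', i) (j', j))
      = (m:ℂ)⁻¹ • single i j (1:ℂ) := by
    ext i' j'
    simp [maxEntProj, single, eq_comm]
  show Ψ (Matrix.of fun i' j' => maxEntProj (Fin m) (i', i) (j', j)) a b = _
  rw [h1, _root_.map_smul]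
  simp

lemma amplify_eq_sum {m : ℕ} {κ : Type*} [Fintype κ]
    (Ψ : Matrix (Fin m) (Fin m) ℂ →ₗ[ℂ] Matrix (Fin m) (Fin m) ℂ)
    (M : Matrix (Fin m × κ) (Fin m × κ) ℂ) (p q : Fin m × κ) :
    amplify ⇑Ψ M p q = (m:ℂ) * ∑ i, ∑ j, M (i, p.2) (j, q.2) * choi ⇑Ψ ((p.1,i)) ((q.1,j)) := by
  have hm : (m:ℂ) ≠ 0 := Nat.cast_ne_zero.mpr p.1.pos.ne'
  have h2 : (Matrix.of fun i j => M (i, p.2) (j, q.2))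
      = ∑ i, ∑ j, M (i,p.2) (j,q.2) • single i j (1:ℂ) := by
    conv_lhs => rw [matrix_eq_sum_single (Matrix.of fun i j => M (i, p.2) (j, q.2))]
    refine Finset.sum_congr rfl fun i _ => Finset.sum_congr rfl fun j _ => ?_
    rw [smul_single]; simp
  show Ψ (Matrix.of fun i j => M (i, p.2) (j, q.2)) p.1 q.1 = _
  rw [h2]
  simp only [map_sum, Matrix.sum_apply, choi_apply', Finset.mul_sum]
  refine Finset.sum_congr rfl fun i _ => Finset.sum_congr rfl fun j _ => ?_
  rw [_root_.map_smul]
  simp only [Matrix.smul_apply, smul_eq_mul]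
  field_simp

lemma blockDiag_psd {ι τ : Type*} [Fintype ι] [DecidableEq ι] [Fintype τ]
    (N : Matrix τ τ ℂ) (hN : N.PosSemidef) :
    (Matrix.of fun (r s : ι × τ) => if r.1 = s.1 then N r.2 s.2 else 0).PosSemidef := by
  rw [posSemidef_iff_dotProduct_mulVec]
  constructor
  · ext r s
    simp only [conjTranspose_apply, of_apply]
    by_cases h : r.1 = s.1
    · rw [if_pos h.symm, if_pos h]
      exact hN.1.apply _ _
    · rw [if_neg (fun hh => h hh.symm), if_neg h, star_zero]
  · intro x
    have key : star x ⬝ᵥ (Matrix.of fun (r s : ι × τ) => if r.1 = s.1 then N r.2 s.2 else 0) *ᵥ x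
        = ∑ c : ι, star (fun w => x (c, w)) ⬝ᵥ N *ᵥ (fun w => x (c, w)) := by
      simp only [dotProduct, mulVec, Pi.star_apply, of_apply, Fintype.sum_prod_type,
        ite_mul, mul_ite, zero_mul, mul_zero, Finset.sum_ite_irrel, Finset.sum_ite_eq,
        Finset.sum_ite_eq', Finset.mem_univ, if_true, Finset.sum_const_zero, Finset.mul_sum]
    rw [key]
    exact Finset.sum_nonneg fun c _ => hN.dotProduct_mulVec_nonneg _

/-- Choi's theorem direction: if the Choi matrix of `Ψ` is PSD then every ampliation of `Ψ`
preserves positive semidefiniteness. -/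
lemma amplify_posSemidef_of_choi {m : ℕ} {κ : Type*} [Fintype κ] [DecidableEq κ]
    (Ψ : Matrix (Fin m) (Fin m) ℂ →ₗ[ℂ] Matrix (Fin m) (Fin m) ℂ)
    (hN : (choi ⇑Ψ).PosSemidef)
    (M : Matrix (Fin m × κ) (Fin m × κ) ℂ) (hM : M.PosSemidef) :
    (amplify ⇑Ψ M).PosSemidef := by
  open MatrixOrder Matrix.Norms.L2Operator in
  obtain ⟨C, hC⟩ := CStarAlgebra.nonneg_iff_eq_star_mul_self.mp hM.nonneg
  subst hC; rw [star_eq_conjTranspose]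
  set N := choi ⇑Ψ with hNdef
  have main : amplify ⇑Ψ (Cᴴ * C) =
      (Matrix.of fun (r : (Fin m × κ) × (Fin m × Fin m)) (s : Fin m × κ) =>
        if r.2.1 = s.1 then ((Real.sqrt m : ℝ) : ℂ) * C r.1 (r.2.2, s.2) else 0)ᴴ *
      (Matrix.of fun (r s : (Fin m × κ) × (Fin m × Fin m)) =>
        if r.1 = s.1 then N r.2 s.2 else 0) *
      (Matrix.of fun (r : (Fin m × κ) × (Fin m × Fin m)) (s : Fin m × κ) =>
        if r.2.1 = s.1 then ((Real.sqrt m : ℝ) : ℂ) * C r.1 (r.2.2, s.2) else 0) := by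
    ext p q
    rw [amplify_eq_sum]
    symm
    simp only [Matrix.mul_apply, conjTranspose_apply, of_apply, Fintype.sum_prod_type,
      ite_mul, mul_ite, zero_mul, mul_zero, Finset.sum_ite_irrel, Finset.sum_ite_eq,
      Finset.sum_ite_eq', Finset.mem_univ, if_true, apply_ite (star : ℂ → ℂ), star_zero,
      star_mul', RCLike.star_def, Complex.conj_ofReal, Finset.sum_const_zero, Prod.mk.injEq,
      ite_and]
    simp only [Finset.sum_mul, Finset.mul_sum]
    rw [sum4]
    refine Finset.sum_congr rfl fun i _ => Finset.sum_congr rfl fun j _ =>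
      Finset.sum_congr rfl fun c1 _ => Finset.sum_congr rfl fun c2 _ => ?_
    have hsq : ((Real.sqrt m : ℝ) : ℂ) * ((Real.sqrt m : ℝ) : ℂ) = (m:ℂ) := by
      rw [← Complex.ofReal_mul, Real.mul_self_sqrt (Nat.cast_nonneg m)]
      norm_num
    linear_combination ((starRingEnd ℂ) (C (c1, c2) (i, p.2)) * C (c1, c2) (j, q.2) *
      N (p.1, i) (q.1, j)) * hsq
  rw [main]
  exact (blockDiag_psd N hN).conjTranspose_mul_mul_same _

theorem oneSided_PPT_inducing_iff {m n : ℕ} (hmn : m ≤ n)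
    (Φ : Matrix (Fin m) (Fin m) ℂ →ₗ[ℂ] Matrix (Fin m) (Fin m) ℂ)
    (hCP : IsCP ⇑Φ) (hTP : ∀ X, (Φ X).trace = X.trace) :
    (∀ ρ : Matrix (Fin m × Fin n) (Fin m × Fin n) ℂ, IsState ρ →
      (ptB (amplify ⇑Φ ρ)).PosSemidef) ↔ (ptB (choi ⇑Φ)).PosSemidef := by
  constructor
  · -- necessity: test on the (embedded) maximally entangled state
    intro h
    rcases Nat.eq_zero_or_pos m with hm | hm
    · subst hm
      refine posSemidef_iff_dotProduct_mulVec.mpr ⟨?_, ?_⟩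
      · ext p q; exact p.1.elim0
      · intro x
        have h0 : star x ⬝ᵥ (ptB (choi ⇑Φ)) *ᵥ x = 0 := by
          simp [dotProduct]
        rw [h0]
    · set ρ : Matrix (Fin m × Fin n) (Fin m × Fin n) ℂ :=
        Matrix.of fun p q =>
          if ((p.1 : ℕ) = (p.2 : ℕ)) ∧ ((q.1 : ℕ) = (q.2 : ℕ)) then (m:ℂ)⁻¹ else 0 with hρdef
      have hmC : (m:ℂ) ≠ 0 := Nat.cast_ne_zero.mpr hm.ne'
      have hstate : IsState ρ := by
        constructor
        · -- ρ = Bᴴ * B for the row vector B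
          have hB : ρ = (Matrix.of fun (_ : Unit) (p : Fin m × Fin n) =>
              (((Real.sqrt m)⁻¹ : ℝ) : ℂ) * (if ((p.1 : ℕ) = (p.2 : ℕ)) then 1 else 0))ᴴ *
              (Matrix.of fun (_ : Unit) (p : Fin m × Fin n) =>
              (((Real.sqrt m)⁻¹ : ℝ) : ℂ) * (if ((p.1 : ℕ) = (p.2 : ℕ)) then 1 else 0)) := by
            ext p q
            have hsq : (((Real.sqrt m)⁻¹ : ℝ) : ℂ) * (((Real.sqrt m)⁻¹ : ℝ) : ℂ) = (m:ℂ)⁻¹ := by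
              rw [← Complex.ofReal_mul, ← mul_inv, Real.mul_self_sqrt (Nat.cast_nonneg m)]
              norm_num
            have hsq2 : ((Real.sqrt m : ℝ) : ℂ) ^ 2 = (m:ℂ) := by
              rw [← Complex.ofReal_pow, Real.sq_sqrt (Nat.cast_nonneg m)]
              norm_num
            simp only [hρdef, Matrix.mul_apply, conjTranspose_apply, of_apply,
              Finset.univ_unique, Finset.sum_singleton, star_mul', RCLike.star_def,
              Complex.conj_ofReal, apply_ite (starRingEnd ℂ), _root_.map_one, _root_.map_zero]
            by_cases h1 : (p.1 : ℕ) = (p.2 : ℕ) <;> by_cases h2 : (q.1 : ℕ) = (q.2 : ℕ) <;>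
              simp [h1, h2, hsq, hsq2] <;> field_simp <;> rw [← hsq2] <;> ring
          rw [hB]
          exact posSemidef_conjTranspose_mul_self _
        · -- trace 1
          have : ρ.trace = ∑ i : Fin m, ∑ k : Fin n, (if k = Fin.castLE hmn i then (m:ℂ)⁻¹ else 0) := by
            simp only [trace, diag, hρdef, of_apply, Fintype.sum_prod_type]
            refine Finset.sum_congr rfl fun i _ => Finset.sum_congr rfl fun k _ => ?_
            congr 1
            simp [Fin.ext_iff, eq_comm, and_self]
          rw [this]
          simp [Finset.sum_ite_eq', Finset.mem_univ, mul_inv_cancel₀ hmC,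
            Finset.sum_const, Finset.card_univ]
      have hpsd := h ρ hstate
      have hsub : ptB (choi ⇑Φ) = (ptB (amplify ⇑Φ ρ)).submatrix
          (fun p : Fin m × Fin m => (p.1, Fin.castLE hmn p.2))
          (fun p : Fin m × Fin m => (p.1, Fin.castLE hmn p.2)) := by
        ext p q
        show (choi ⇑Φ) (p.1, q.2) (q.1, p.2) = (amplify ⇑Φ ρ) _ _
        show Φ (Matrix.of fun i j => maxEntProj (Fin m) (i, q.2) (j, p.2)) p.1 q.1
          = Φ (Matrix.of fun i j =>
              ρ (i, Fin.castLE hmn q.2) (j, Fin.castLE hmn p.2)) p.1 q.1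
        have hslice : (Matrix.of fun i j => maxEntProj (Fin m) (i, q.2) (j, p.2))
            = (Matrix.of fun (i j : Fin m) =>
              ρ (i, Fin.castLE hmn q.2) (j, Fin.castLE hmn p.2)) := by
          ext i j
          simp [maxEntProj, hρdef, Fin.ext_iff]
        rw [hslice]
      rw [hsub]
      exact hpsd.submatrix _
  · -- sufficiency: via the map X ↦ Φ Xᵀ
    intro hC ρ hρ
    set Ψ : Matrix (Fin m) (Fin m) ℂ →ₗ[ℂ] Matrix (Fin m) (Fin m) ℂ :=
      { toFun := fun X => Φ Xᵀ,
        map_add' := fun X Y => by simp [transpose_add],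
        map_smul' := fun c X => by simp [transpose_smul] } with hΨdef
    have h1 : ptB (choi ⇑Φ) = choi ⇑Ψ := by
      ext p q
      show Φ (Matrix.of fun i j => maxEntProj (Fin m) (i, q.2) (j, p.2)) p.1 q.1
        = Φ (Matrix.of fun i j => maxEntProj (Fin m) (i, p.2) (j, q.2))ᵀ p.1 q.1
      have hslice : (Matrix.of fun i j => maxEntProj (Fin m) (i, q.2) (j, p.2))
          = (Matrix.of fun i j => maxEntProj (Fin m) (i, p.2) (j, q.2))ᵀ := by
        ext i j
        simp [maxEntProj, transpose_apply, and_comm]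
      rw [hslice]
    have h2 : ptB (amplify ⇑Φ ρ) = amplify ⇑Ψ ρᵀ := by
      ext p q
      show Φ (Matrix.of fun i j => ρ (i, q.2) (j, p.2)) p.1 q.1
        = Φ (Matrix.of fun i j => ρᵀ (i, p.2) (j, q.2))ᵀ p.1 q.1
      have hslice : (Matrix.of fun i j => ρ (i, q.2) (j, p.2))
          = (Matrix.of fun (i j : Fin m) => ρᵀ (i, p.2) (j, q.2))ᵀ := by
        ext i j
        simp [transpose_apply]
      rw [hslice]
    rw [h2]
    exact amplify_posSemidef_of_choi Ψ (h1 ▸ hC) ρᵀ hρ.1.transpose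
end
end

section
/- For the two-qutrit local depolarizing channel Φ_q ⊗ Φ_q with Φ_q[X] = qX + (1−q)tr(X)I/3 applied to the pure input |ψ⟩ = (|11⟩ + |22⟩)/√2, the minimal eigenvalue of the partial transpose of the output is nonnegative if and only if q ≤ (1+√3)/(4+√3). -/
open Matrix Kronecker BigOperators ComplexOrder

noncomputable section

/-- The depolarizing map Φ_q[X] = qX + (1−q) tr(X) I/d. -/
def depol (d : ℕ) (q : ℝ) (X : Matrix (Fin d) (Fin d) ℂ) : Matrix (Fin d) (Fin d) ℂ :=
  (q : ℂ) • X + ((1 - q : ℝ) : ℂ) • X.trace • ((d : ℂ)⁻¹ • (1 : Matrix (Fin d) (Fin d) ℂ))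

/-- The Schmidt-rank-2 input state |ψ⟩ = (|11⟩ + |22⟩)/√2 of two qutrits. -/
def psiTwo : Fin 3 × Fin 3 → ℂ :=
  fun p => if (p.1 = 0 ∧ p.2 = 0) ∨ (p.1 = 1 ∧ p.2 = 1)
    then (((Real.sqrt 2)⁻¹ : ℝ) : ℂ) else 0

/-- Explicit entries of the partial transpose of the output state. -/
def ent (q : ℝ) (p r : Fin 3 × Fin 3) : ℝ :=
  if p = r then
    (if p = (0,0) ∨ p = (1,1) then q^2/2 + q*(1-q)/3 + (1-q)^2/9
     else if p = (0,1) ∨ p = (1,0) then q*(1-q)/3 + (1-q)^2/9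
     else if p = (2,2) then (1-q)^2/9
     else q*(1-q)/6 + (1-q)^2/9)
  else if (p = (0,1) ∧ r = (1,0)) ∨ (p = (1,0) ∧ r = (0,1)) then q^2/2
  else 0

def entM (q : ℝ) : Matrix (Fin 3 × Fin 3) (Fin 3 × Fin 3) ℂ :=
  Matrix.of fun p r => ((ent q p r : ℝ) : ℂ)

def bv (i j : Fin 3) : Fin 3 × Fin 3 → ℂ := fun p => if p = (i,j) then 1 else 0

def uv : Fin 3 × Fin 3 → ℂ := fun p => if p = (0,1) ∨ p = (1,0) then 1 else 0

def wv : Fin 3 × Fin 3 → ℂ := fun p => if p = (0,1) then 1 else if p = (1,0) then -1 else 0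

def rk1 (v : Fin 3 × Fin 3 → ℂ) : Matrix (Fin 3 × Fin 3) (Fin 3 × Fin 3) ℂ :=
  vecMulVec v (star v)

lemma psd_rk1 (v : Fin 3 × Fin 3 → ℂ) : (rk1 v).PosSemidef := by
  rw [rk1, vecMulVec_eq Unit, ← Matrix.conjTranspose_replicateCol]
  exact Matrix.posSemidef_self_mul_conjTranspose _

lemma psd_add {A B : Matrix (Fin 3 × Fin 3) (Fin 3 × Fin 3) ℂ}
    (hA : A.PosSemidef) (hB : B.PosSemidef) : (A + B).PosSemidef := by
  refine Matrix.PosSemidef.of_dotProduct_mulVec_nonneg (hA.1.add hB.1) fun x => ?_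
  simp only [Matrix.add_mulVec, dotProduct_add]
  exact add_nonneg (hA.dotProduct_mulVec_nonneg x) (hB.dotProduct_mulVec_nonneg x)

lemma psd_smul {A : Matrix (Fin 3 × Fin 3) (Fin 3 × Fin 3) ℂ}
    (hA : A.PosSemidef) {c : ℝ} (hc : 0 ≤ c) : (((c : ℝ) : ℂ) • A).PosSemidef := by
  refine Matrix.PosSemidef.of_dotProduct_mulVec_nonneg ?_ fun x => ?_
  · unfold Matrix.IsHermitian
    rw [Matrix.conjTranspose_smul, hA.1]
    simp [Complex.conj_ofReal]
  · rw [Matrix.smul_mulVec, dotProduct_smul, smul_eq_mul]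
    exact mul_nonneg (Complex.zero_le_real.mpr hc) (hA.dotProduct_mulVec_nonneg x)

set_option maxHeartbeats 2000000 in
lemma key (q : ℝ) :
    ptB (tensorMap (depol 3 q) (depol 3 q) (vecMulVec psiTwo (star psiTwo))) = entM q := by
  have h2 : ((Real.sqrt 2 : ℝ) : ℂ)⁻¹ * ((Real.sqrt 2 : ℝ) : ℂ)⁻¹ = (2 : ℂ)⁻¹ := by
    rw [← mul_inv, ← Complex.ofReal_mul, Real.mul_self_sqrt (by norm_num : (0:ℝ) ≤ 2)]
    norm_num
  ext ⟨i,j⟩ ⟨k,l⟩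
  fin_cases i <;> fin_cases j <;> fin_cases k <;> fin_cases l <;>
    simp [ptB, tensorMap, amplify, amplifyL, depol, psiTwo, ent, entM, vecMulVec,
      Matrix.trace, Fin.sum_univ_three, Matrix.one_apply, Matrix.diag, Prod.ext_iff] <;>
    simp only [h2] <;> push_cast <;> ring

set_option maxHeartbeats 1000000 in
lemma decomp (q : ℝ) :
    entM q =
      (((q^2/2 + q*(1-q)/3 + (1-q)^2/9 : ℝ) : ℂ) • (rk1 (bv 0 0) + rk1 (bv 1 1))) +
      (((q*(1-q)/6 + (1-q)^2/9 : ℝ) : ℂ) •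
        (rk1 (bv 0 2) + rk1 (bv 2 0) + rk1 (bv 1 2) + rk1 (bv 2 1))) +
      ((((1-q)^2/9 : ℝ) : ℂ) • rk1 (bv 2 2)) +
      ((((q*(1-q)/3 + (1-q)^2/9 + q^2/2)/2 : ℝ) : ℂ) • rk1 uv) +
      ((((q*(1-q)/3 + (1-q)^2/9 - q^2/2)/2 : ℝ) : ℂ) • rk1 wv) := by
  ext ⟨i,j⟩ ⟨k,l⟩
  fin_cases i <;> fin_cases j <;> fin_cases k <;> fin_cases l <;>
    simp only [entM, ent, rk1, bv, uv, wv, vecMulVec_apply, Matrix.add_apply,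
      Matrix.smul_apply, Matrix.of_apply, Pi.star_apply, smul_eq_mul, Prod.mk.injEq,
      star_one, star_zero, star_neg, Fin.ext_iff]
  all_goals simp only [Fin.isValue, show ((0:Fin 3):ℕ)=0 from rfl, show ((1:Fin 3):ℕ)=1 from rfl,
    show ((2:Fin 3):ℕ)=2 from rfl, Nat.zero_ne_one, Nat.one_ne_zero, and_true, true_and,
    and_false, false_and, or_false, false_or, and_self, or_self, if_true, if_false,
    OfNat.ofNat_ne_zero, OfNat.ofNat_ne_one, OfNat.zero_ne_ofNat, OfNat.one_ne_ofNat, map_zero]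
  all_goals norm_num
  all_goals push_cast
  all_goals ring

set_option maxHeartbeats 1000000 in
lemma form_wv (q : ℝ) :
    star wv ⬝ᵥ (entM q).mulVec wv = (((2 + 2*q - 13*q^2)/9 : ℝ) : ℂ) := by
  simp [entM, ent, wv, dotProduct, Matrix.mulVec, Fintype.sum_prod_type,
    Fin.sum_univ_three, Prod.ext_iff]
  push_cast
  ring

/-- for the two-qutrit local depolarizing channel applied to
|ψ⟩ = (|11⟩+|22⟩)/√2, the partial transpose of the output is positive semidefinite iff
q ≤ (1+√3)/(4+√3). -/
theorem qutrit_depol_PPT_iff (q : ℝ) (hq : -(1 / 8 : ℝ) ≤ q) :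
    (ptB (tensorMap (depol 3 q) (depol 3 q) (vecMulVec psiTwo (star psiTwo)))).PosSemidef ↔
      q ≤ (1 + Real.sqrt 3) / (4 + Real.sqrt 3) := by
  have hs0 : (0:ℝ) ≤ Real.sqrt 3 := Real.sqrt_nonneg 3
  have hs2 : Real.sqrt 3 ^ 2 = 3 := Real.sq_sqrt (by norm_num)
  have hs1 : (1:ℝ) ≤ Real.sqrt 3 := by nlinarith
  have hsu : Real.sqrt 3 ≤ 2 := by nlinarith
  have hrhs : (1 + Real.sqrt 3) / (4 + Real.sqrt 3) = (1 + 3*Real.sqrt 3)/13 := by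
    rw [div_eq_div_iff (by linarith) (by norm_num)]
    nlinarith
  rw [key q, hrhs]
  constructor
  · intro h
    have h2 := h.dotProduct_mulVec_nonneg wv
    rw [form_wv q, Complex.zero_le_real] at h2
    by_contra hgt
    push_neg at hgt
    have h1 : 0 < 13*q - 1 - 3*Real.sqrt 3 := by linarith [hgt]
    have h3 : 0 < 13*q - 1 + 3*Real.sqrt 3 := by nlinarith
    nlinarith [mul_pos h1 h3]
  · intro hle
    have hcm : 0 ≤ (q*(1-q)/3 + (1-q)^2/9 - q^2/2)/2 := by
      have h1 : 0 ≤ 1 + 3*Real.sqrt 3 - 13*q := by linarith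
      have h3 : 0 ≤ 13*q - 1 + 3*Real.sqrt 3 := by nlinarith
      nlinarith [mul_nonneg h1 h3]
    have hq1 : q ≤ 1 := by nlinarith
    rw [decomp q]
    refine psd_add (psd_add (psd_add (psd_add
      (psd_smul (psd_add (psd_rk1 _) (psd_rk1 _)) (by nlinarith [sq_nonneg (5*q+1)]))
      (psd_smul (psd_add (psd_add (psd_add (psd_rk1 _) (psd_rk1 _)) (psd_rk1 _)) (psd_rk1 _))
        (by nlinarith)))
      (psd_smul (psd_rk1 _) (by positivity)))
      (psd_smul (psd_rk1 _) (by nlinarith [sq_nonneg (5*q+1)])))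
      (psd_smul (psd_rk1 _) hcm)
end
end
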